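/- Let p, q, s, t ∈ ℝ² with p ≠ q and s ≠ t. If the lines p* ∩ q* and s* ∩ t* in ℝ³ coincide, then {p, q} = {s, t}. -/

import Mathlib

/-- The dual plane of a point `u ∈ ℝ²`. -/
def dualPlane (u : ℝ × ℝ) : Set (ℝ × ℝ × ℝ) :=
  {v | v.2.2 = -2 * u.1 * v.1 - 2 * u.2 * v.2.1 + u.1 ^ 2 + u.2 ^ 2}

lemma core (p1 p2 d1 d2 a b : ℝ) (hD : d1^2 + d2^2 ≠ 0)
    (hsub : ∀ x y z : ℝ,
      z = -2*p1*x - 2*p2*y + p1^2 + p2^2 →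
      z = -2*(p1+d1)*x - 2*(p2+d2)*y + (p1+d1)^2 + (p2+d2)^2 →
      z = -2*(p1+a)*x - 2*(p2+b)*y + (p1+a)^2 + (p2+b)^2) :
    (a = 0 ∧ b = 0) ∨ (a = d1 ∧ b = d2) := by
  set x0 : ℝ := (p1*d1+p2*d2+(d1^2+d2^2)/2)*d1/(d1^2+d2^2) with hx0def
  set y0 : ℝ := (p1*d1+p2*d2+(d1^2+d2^2)/2)*d2/(d1^2+d2^2) with hy0def
  have hx : x0*(d1^2+d2^2) = (p1*d1+p2*d2+(d1^2+d2^2)/2)*d1 := by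
    rw [hx0def]; field_simp
  have hy : y0*(d1^2+d2^2) = (p1*d1+p2*d2+(d1^2+d2^2)/2)*d2 := by
    rw [hy0def]; field_simp
  have hq0 : -2*p1*x0 - 2*p2*y0 + p1^2 + p2^2
      = -2*(p1+d1)*x0 - 2*(p2+d2)*y0 + (p1+d1)^2 + (p2+d2)^2 := by
    rw [hx0def, hy0def]; field_simp; ring
  have hq1 : -2*p1*(x0 - d2) - 2*p2*(y0 + d1) + p1^2 + p2^2
      = -2*(p1+d1)*(x0 - d2) - 2*(p2+d2)*(y0 + d1) + (p1+d1)^2 + (p2+d2)^2 := by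
    rw [hx0def, hy0def]; field_simp; ring
  clear_value x0 y0
  have hE0 := hsub x0 y0 _ rfl hq0
  have hE1 := hsub (x0 - d2) (y0 + d1) _ rfl hq1
  have hA : a*d2 - b*d1 = 0 := by linear_combination (hE0 - hE1)/2
  have hB : (a*d1 + b*d2) * ((d1^2+d2^2) - (a*d1 + b*d2)) = 0 := by
    linear_combination (d1^2+d2^2)*hE0 - 2*a*hx - 2*b*hy
      + (a*d2 - b*d1 + 2*(p1*d2 - p2*d1))*hA
  rcases mul_eq_zero.mp hB with hS | hS
  · left
    have ha : a*(d1^2+d2^2) = 0 := by linear_combination d1*hS + d2*hA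
    have hb : b*(d1^2+d2^2) = 0 := by linear_combination d2*hS - d1*hA
    exact ⟨(mul_eq_zero.mp ha).resolve_right hD, (mul_eq_zero.mp hb).resolve_right hD⟩
  · right
    have ha : (a - d1)*(d1^2+d2^2) = 0 := by linear_combination -d1*hS + d2*hA
    have hb : (b - d2)*(d1^2+d2^2) = 0 := by linear_combination -d2*hS - d1*hA
    constructor
    · have := (mul_eq_zero.mp ha).resolve_right hD; linarith
    · have := (mul_eq_zero.mp hb).resolve_right hD; linarith

lemma mem_core (p q u : ℝ × ℝ) (hpq : p ≠ q)
    (hsub : dualPlane p ∩ dualPlane q ⊆ dualPlane u) : u = p ∨ u = q := by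
  obtain ⟨p1, p2⟩ := p
  obtain ⟨q1, q2⟩ := q
  obtain ⟨u1, u2⟩ := u
  have hD : (q1-p1)^2 + (q2-p2)^2 ≠ 0 := by
    intro h0
    apply hpq
    have h1 : (q1-p1)^2 = 0 := le_antisymm (by nlinarith [sq_nonneg (q2-p2)]) (sq_nonneg _)
    have h2 : (q2-p2)^2 = 0 := le_antisymm (by nlinarith [sq_nonneg (q1-p1)]) (sq_nonneg _)
    have h1' : q1 - p1 = 0 := by
      have := sq_eq_zero_iff.mp h1; linarith [this]
    have h2' : q2 - p2 = 0 := by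
      have := sq_eq_zero_iff.mp h2; linarith [this]
    have : p1 = q1 := by linarith
    have : p2 = q2 := by linarith
    simp_all
  have key := core p1 p2 (q1-p1) (q2-p2) (u1-p1) (u2-p2) hD ?_
  · rcases key with ⟨ha, hb⟩ | ⟨ha, hb⟩
    · left; ext <;> simp <;> linarith
    · right; ext <;> simp <;> linarith
  · intro x y z h1 h2
    have hm : ((x, y, z) : ℝ × ℝ × ℝ) ∈ dualPlane (p1, p2) ∩ dualPlane (q1, q2) := by
      constructor
      · show z = _; simpa [dualPlane] using h1
      · show z = _; simp only [dualPlane, Set.mem_setOf_eq]; linear_combination h2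
    have := hsub hm
    simp only [dualPlane, Set.mem_setOf_eq] at this
    linear_combination this

/-- If the lines `p* ∩ q*` and `s* ∩ t*` coincide (with `p ≠ q`, `s ≠ t`),
then `{p, q} = {s, t}`. -/
theorem dual_lines_coincide (p q s t : ℝ × ℝ) (hpq : p ≠ q) (hst : s ≠ t)
    (h : dualPlane p ∩ dualPlane q = dualPlane s ∩ dualPlane t) :
    ({p, q} : Set (ℝ × ℝ)) = {s, t} := by
  have hs : s = p ∨ s = q := mem_core p q s hpq (by rw [h]; exact Set.inter_subset_left)
  have ht : t = p ∨ t = q := mem_core p q t hpq (by rw [h]; exact Set.inter_subset_right)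
  have hp : p = s ∨ p = t := mem_core s t p hst (by rw [← h]; exact Set.inter_subset_left)
  have hq : q = s ∨ q = t := mem_core s t q hst (by rw [← h]; exact Set.inter_subset_right)
  ext x
  simp only [Set.mem_insert_iff, Set.mem_singleton_iff]
  constructor
  · rintro (rfl | rfl)
    · exact hp
    · exact hq
  · rintro (rfl | rfl)
    · exact hs
    · exact ht
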